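/- Let T₁₁, T₂₁, T₂₂ be matrices over a field of sizes ν₁×μ₁, ν₂×μ₁, ν₂×μ₂. For every matrix X of size ν₁×μ₂, rank[[T₁₁, X],[T₂₁, T₂₂]] ≥ rank[T₁₁; T₂₁] + rank[T₂₁ T₂₂] − rank T₂₁. -/

import Mathlib

open Matrix FiniteDimensional Module

lemma aux_finrank_map_add {F V W : Type*} [Field F] [AddCommGroup V] [Module F V]
    [AddCommGroup W] [Module F W] [FiniteDimensional F V]
    (g : V →ₗ[F] W) (S : Submodule F V) :
    Module.finrank F (S.map g) + Module.finrank F (LinearMap.ker g ⊓ S : Submodule F V)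
      = Module.finrank F S := by
  have h := LinearMap.finrank_range_add_finrank_ker (g.domRestrict S)
  rw [LinearMap.range_domRestrict] at h
  have hk : Module.finrank F (LinearMap.ker (g.domRestrict S))
      = Module.finrank F (LinearMap.ker g ⊓ S : Submodule F V) := by
    rw [LinearMap.ker_domRestrict, ← Submodule.finrank_map_subtype_eq,
      Submodule.map_comap_subtype, inf_comm]
  rw [hk] at h
  simpa using h

lemma frobenius_rank_ineq {F : Type*} [Field F] {l m n p : Type*}
    [Fintype l] [Fintype m] [Fintype n] [Fintype p]
    (A : Matrix l m F) (B : Matrix m n F) (C : Matrix n p F) :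
    (A * B).rank + (B * C).rank ≤ (A * B * C).rank + B.rank := by
  have h1 := aux_finrank_map_add A.mulVecLin (LinearMap.range (B * C).mulVecLin)
  have h2 := aux_finrank_map_add A.mulVecLin (LinearMap.range B.mulVecLin)
  have hAB : (A * B).rank
      = Module.finrank F ((LinearMap.range B.mulVecLin).map A.mulVecLin) := by
    rw [Matrix.rank, Matrix.mulVecLin_mul, LinearMap.range_comp]
  have hABC : (A * B * C).rank
      = Module.finrank F ((LinearMap.range (B * C).mulVecLin).map A.mulVecLin) := by
    rw [Matrix.mul_assoc, Matrix.rank, Matrix.mulVecLin_mul, LinearMap.range_comp]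
  have hle : LinearMap.range (B * C).mulVecLin ≤ LinearMap.range B.mulVecLin := by
    rw [Matrix.mulVecLin_mul]
    exact LinearMap.range_comp_le_range _ _
  have hmono : Module.finrank F
        (LinearMap.ker A.mulVecLin ⊓ LinearMap.range (B * C).mulVecLin : Submodule F _)
      ≤ Module.finrank F
        (LinearMap.ker A.mulVecLin ⊓ LinearMap.range B.mulVecLin : Submodule F _) :=
    Submodule.finrank_mono (inf_le_inf_left _ hle)
  rw [hAB, hABC, Matrix.rank, Matrix.rank]
  omega

/-- Lower bound half of the 2×2 minimal rank completion formula. -/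
theorem rank_completion_lower_bound {F : Type*} [Field F] {ν₁ ν₂ μ₁ μ₂ : ℕ}
    (T₁₁ : Matrix (Fin ν₁) (Fin μ₁) F) (T₂₁ : Matrix (Fin ν₂) (Fin μ₁) F)
    (T₂₂ : Matrix (Fin ν₂) (Fin μ₂) F) (X : Matrix (Fin ν₁) (Fin μ₂) F) :
    (Matrix.fromRows T₁₁ T₂₁).rank + (Matrix.fromCols T₂₁ T₂₂).rank
        - T₂₁.rank ≤ (Matrix.fromBlocks T₁₁ X T₂₁ T₂₂).rank := by
  set M := Matrix.fromBlocks T₁₁ X T₂₁ T₂₂ with hM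
  set A : Matrix (Fin ν₂) (Fin ν₁ ⊕ Fin ν₂) F := Matrix.fromCols 0 1 with hA
  set C : Matrix (Fin μ₁ ⊕ Fin μ₂) (Fin μ₁) F := Matrix.fromRows 1 0 with hC
  have hAM : A * M = Matrix.fromCols T₂₁ T₂₂ := by
    rw [hA, hM, Matrix.fromCols_mul_fromBlocks]; simp
  have hMC : M * C = Matrix.fromRows T₁₁ T₂₁ := by
    rw [hC, hM, Matrix.fromBlocks_mul_fromRows]; simp
  have hAMC : A * M * C = T₂₁ := by
    rw [hAM, hC, Matrix.fromCols_mul_fromRows]; simp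
  have h := frobenius_rank_ineq A M C
  rw [hAMC, hAM, hMC] at h
  omega
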